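/- Assume the spectral locus is convex. Then for every closed half-plane H of A (i.e. H = {x ∈ A : ℓ(x) ≤ t} for some linear functional ℓ on ℝ³ that is nonconstant on A and some t ∈ ℝ), the preimage η^{-1}(H) = {λ ∈ [0,1] : η(λ) ∈ H} is either empty, or all of [0,1], or a closed cyclic interval [a,b]_𝕋 for some a, b ∈ [0,1]. -/

import Mathlib

open MeasureTheory Set Real

noncomputable section

abbrev E3 := EuclideanSpace ℝ (Fin 3)

/-- The affine hyperplane `A = {x ∈ ℝ³ : x₁ + x₂ + x₃ = 1}`. -/
def planeA : Set E3 := {x | x 0 + x 1 + x 2 = 1}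

/-- The standard 2-simplex `Δ²`. -/
def simplex2 : Set E3 := {x | (∀ i, 0 ≤ x i) ∧ x 0 + x 1 + x 2 = 1}

/-- Interior relative to the affine hyperplane `A` (for subsets of `A`). -/
def intA (s : Set E3) : Set E3 :=
  {x | x ∈ planeA ∧ ∃ U : Set E3, IsOpen U ∧ x ∈ U ∧ U ∩ planeA ⊆ s}

/-- Closure relative to the affine hyperplane `A` (for subsets of `A`). -/
def closA (s : Set E3) : Set E3 :=
  {x | x ∈ planeA ∧ ∀ U : Set E3, IsOpen U → x ∈ U → (U ∩ planeA ∩ s).Nonempty}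

/-- Boundary relative to the affine hyperplane `A` (for subsets of `A`). -/
def frontA (s : Set E3) : Set E3 := closA s \ intA s

/-- The color triangle `T = conv(η([0,1]))`. -/
def colorTri (η : ℝ → E3) : Set E3 := convexHull ℝ (η '' Icc 0 1)

/-- The cyclic interval `[a,b]_𝕋 ⊆ [0,1]`. -/
def cycIcc (a b : ℝ) : Set ℝ := if a ≤ b then Icc a b else Icc a 1 ∪ Icc 0 b

/-- The color of a spectral density `f` w.r.t. the reference measure `mu`:
`c(f) = ∫_{[0,1]} f(λ) • η(λ) dμ̃(λ)`. -/
def colorOf (mu : Measure ℝ) (η : ℝ → E3) (f : ℝ → ℝ) : E3 :=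
  ∫ lam in Icc (0:ℝ) 1, f lam • η lam ∂mu

/-- The spectral locus is convex: `η([0,1]) ⊆ ∂T` and from each interior point of `T` the locus
is seen under a continuous monotone angle `θ_c` with total variation at most `2π`, where the
angle is measured in the fixed orthonormal frame `(u, v)` of the direction plane of `A`. -/
def IsConvexLocus (η : ℝ → E3) (u v : E3) : Prop :=
  η '' Icc 0 1 ⊆ frontA (colorTri η) ∧
  ∀ c ∈ intA (colorTri η), ∃ θ : ℝ → ℝ,
    ContinuousOn θ (Icc 0 1) ∧
    (MonotoneOn θ (Icc 0 1) ∨ AntitoneOn θ (Icc 0 1)) ∧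
    |θ 1 - θ 0| ≤ 2 * π ∧
    ∀ lam ∈ Icc (0:ℝ) 1,
      η lam - c = ‖η lam - c‖ • (Real.cos (θ lam) • u + Real.sin (θ lam) • v)

/-- The spectral locus is strictly convex: convex, and moreover `η(λ)` does not lie on the chord
`[η(a), η(b)]` for pairwise distinct `a, b, λ ∈ [0,1]`. -/
def IsStrictConvexLocus (η : ℝ → E3) (u v : E3) : Prop :=
  IsConvexLocus η u v ∧
  ∀ a ∈ Icc (0:ℝ) 1, ∀ b ∈ Icc (0:ℝ) 1, ∀ lam ∈ Icc (0:ℝ) 1,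
    a ≠ b → b ≠ lam → a ≠ lam → η lam ∉ segment ℝ (η a) (η b)

/-- A closed subset of `[0,1]` which is order-connected or has order-connected complement
is empty, all of `[0,1]`, or a cyclic interval. -/
lemma cyc_of_closed_oc (C : Set ℝ) (hsub : C ⊆ Icc 0 1) (hcl : IsClosed C)
    (hoc : C.OrdConnected ∨ (Icc 0 1 \ C).OrdConnected) :
    C = ∅ ∨ C = Icc (0:ℝ) 1 ∨
      ∃ a ∈ Icc (0:ℝ) 1, ∃ b ∈ Icc (0:ℝ) 1, C = (if a ≤ b then Icc a b else Icc a 1 ∪ Icc 0 b) := by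
  rcases hoc with hoc | hoc
  · rcases eq_empty_or_nonempty C with h | h
    · exact Or.inl h
    · right; right
      have hbdd : BddBelow C := ⟨0, fun x hx => (hsub hx).1⟩
      have hbda : BddAbove C := ⟨1, fun x hx => (hsub hx).2⟩
      have ha : sInf C ∈ C := hcl.csInf_mem h hbdd
      have hb : sSup C ∈ C := hcl.csSup_mem h hbda
      refine ⟨sInf C, hsub ha, sSup C, hsub hb, ?_⟩
      rw [if_pos (csInf_le_csSup h hbdd hbda)]
      apply le_antisymm
      · intro x hx; exact ⟨csInf_le hbdd hx, le_csSup hbda hx⟩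
      · exact hoc.out ha hb
  · set D := Icc 0 1 \ C with hD
    rcases eq_empty_or_nonempty D with h | h
    · right; left
      apply le_antisymm hsub
      intro x hx
      by_contra hxc
      have hxD : x ∈ D := ⟨hx, hxc⟩
      rw [h] at hxD
      exact hxD
    · have hDsub : D ⊆ Icc 0 1 := fun x hx => hx.1
      have hbdd : BddBelow D := ⟨0, fun x hx => (hDsub hx).1⟩
      have hbda : BddAbove D := ⟨1, fun x hx => (hDsub hx).2⟩
      set p := sInf D with hp
      set q := sSup D with hq
      have hp0 : 0 ≤ p := le_csInf h (fun x hx => (hDsub hx).1)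
      have hq1 : q ≤ 1 := csSup_le h (fun x hx => (hDsub hx).2)
      have hpq : p ≤ q := csInf_le_csSup h hbdd hbda
      have hp1 : p ≤ 1 := hpq.trans hq1
      have hq0 : 0 ≤ q := hp0.trans hpq
      -- interior of [p,q] is in D
      have hIoo : Ioo p q ⊆ D := by
        intro x hx
        obtain ⟨d1, hd1, hd1x⟩ := exists_lt_of_csInf_lt h hx.1
        obtain ⟨d2, hd2, hd2x⟩ := exists_lt_of_lt_csSup h hx.2
        exact hoc.out hd1 hd2 ⟨hd1x.le, hd2x.le⟩
      have hDicc : D ⊆ Icc p q := fun x hx => ⟨csInf_le hbdd hx, le_csSup hbda hx⟩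
      -- if p ∈ D then p = 0
      have hpD : p ∈ D → p = 0 := by
        intro hpd
        by_contra hne
        have hppos : 0 < p := lt_of_le_of_ne hp0 (Ne.symm hne)
        have hsubC : Ico 0 p ⊆ C := by
          intro x hx
          by_contra hxc
          have : x ∈ D := ⟨⟨hx.1, (hx.2.le.trans hp1)⟩, hxc⟩
          exact absurd (csInf_le hbdd this) (not_le.mpr hx.2)
        have : p ∈ closure C := by
          have h1 : p ∈ closure (Ico 0 p) := by
            rw [closure_Ico (ne_of_lt hppos)]
            exact ⟨hp0, le_refl p⟩
          exact closure_mono hsubC h1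
        rw [hcl.closure_eq] at this
        exact hpd.2 this
      have hqD : q ∈ D → q = 1 := by
        intro hqd
        by_contra hne
        have hqlt : q < 1 := lt_of_le_of_ne hq1 hne
        have hsubC : Ioc q 1 ⊆ C := by
          intro x hx
          by_contra hxc
          have : x ∈ D := ⟨⟨hq0.trans hx.1.le, hx.2⟩, hxc⟩
          exact absurd (le_csSup hbda this) (not_le.mpr hx.1)
        have : q ∈ closure C := by
          have h1 : q ∈ closure (Ioc q 1) := by
            rw [closure_Ioc (ne_of_lt hqlt)]
            exact ⟨le_refl q, hq1⟩
          exact closure_mono hsubC h1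
        rw [hcl.closure_eq] at this
        exact hqd.2 this
      by_cases hpd : p ∈ D <;> by_cases hqd : q ∈ D
      · -- p = 0, q = 1, C = ∅
        left
        rw [eq_empty_iff_forall_notMem]
        intro x hx
        have hx01 : x ∈ Icc (0:ℝ) 1 := hsub hx
        have : x ∈ D := by
          rcases eq_or_lt_of_le hx01.1 with h0 | h0
          · rw [← h0, ← hpD hpd]; exact hpd
          rcases eq_or_lt_of_le hx01.2 with h1 | h1
          · rw [h1, ← hqD hqd]; exact hqd
          · exact hIoo ⟨by rw [hpD hpd]; exact h0, by rw [hqD hqd]; exact h1⟩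
        exact this.2 hx
      · -- p = 0, q ∉ D : C = [q,1]
        right; right
        refine ⟨q, ⟨hq0, hq1⟩, 1, ⟨zero_le_one, le_refl 1⟩, ?_⟩
        rw [if_pos hq1]
        ext x
        constructor
        · intro hx
          have hx01 : x ∈ Icc (0:ℝ) 1 := hsub hx
          refine ⟨?_, hx01.2⟩
          by_contra hlt
          push_neg at hlt
          have : x ∈ D := by
            rcases eq_or_lt_of_le hx01.1 with h0 | h0
            · rw [← h0, ← hpD hpd]; exact hpd
            · exact hIoo ⟨by rw [hpD hpd]; exact h0, hlt⟩
          exact this.2 hx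
        · intro hx
          by_contra hxc
          have hxD : x ∈ D := ⟨⟨hq0.trans hx.1, hx.2⟩, hxc⟩
          have := le_csSup hbda hxD
          rcases eq_or_lt_of_le hx.1 with h | h
          · rw [← h] at hxD; exact hqd hxD
          · exact absurd this (not_le.mpr h)
      · -- p ∉ D, q = 1 : C = [0,p]
        right; right
        refine ⟨0, ⟨le_refl 0, zero_le_one⟩, p, ⟨hp0, hp1⟩, ?_⟩
        rw [if_pos hp0]
        ext x
        constructor
        · intro hx
          have hx01 : x ∈ Icc (0:ℝ) 1 := hsub hx
          refine ⟨hx01.1, ?_⟩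
          by_contra hlt
          push_neg at hlt
          have : x ∈ D := by
            rcases eq_or_lt_of_le hx01.2 with h1 | h1
            · rw [h1, ← hqD hqd]; exact hqd
            · exact hIoo ⟨hlt, by rw [hqD hqd]; exact h1⟩
          exact this.2 hx
        · intro hx
          by_contra hxc
          have hxD : x ∈ D := ⟨⟨hx.1, hx.2.trans hp1⟩, hxc⟩
          have := csInf_le hbdd hxD
          rcases eq_or_lt_of_le hx.2 with h | h
          · rw [h] at hxD; exact hpd hxD
          · exact absurd this (not_le.mpr h)
      · -- p ∉ D, q ∉ D : D = Ioo p q, C = [0,1] \ (p,q)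
        have hplt : p < q := by
          obtain ⟨d, hd⟩ := h
          have h1 := hDicc hd
          rcases eq_or_lt_of_le h1.1 with h | h
          · exact absurd (by rw [h]; exact hd) hpd
          rcases eq_or_lt_of_le h1.2 with h' | h'
          · exact absurd (by rw [← h']; exact hd) hqd
          · exact h.trans h'
        right; right
        refine ⟨q, ⟨hq0, hq1⟩, p, ⟨hp0, hp1⟩, ?_⟩
        rw [if_neg (not_le.mpr hplt)]
        ext x
        constructor
        · intro hx
          have hx01 : x ∈ Icc (0:ℝ) 1 := hsub hx
          by_cases hxp : x ≤ p
          · exact Or.inr ⟨hx01.1, hxp⟩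
          · left
            push_neg at hxp
            refine ⟨?_, hx01.2⟩
            by_contra hxq
            push_neg at hxq
            exact (hIoo ⟨hxp, hxq⟩).2 hx
        · intro hx
          by_contra hxc
          rcases hx with hx | hx
          · have hxD : x ∈ D := ⟨⟨hq0.trans hx.1, hx.2⟩, hxc⟩
            have := hDicc hxD
            have hxq : x = q := le_antisymm this.2 hx.1
            rw [hxq] at hxD; exact hqd hxD
          · have hxD : x ∈ D := ⟨⟨hx.1, hx.2.trans hp1⟩, hxc⟩
            have := hDicc hxD
            have hxp : x = p := le_antisymm hx.2 this.1
            rw [hxp] at hxD; exact hpd hxD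

/-- If `cos x ≤ 0` then `x` lies in one of the intervals `[π/2 + 2kπ, 3π/2 + 2kπ]`. -/
lemma cos_nonpos_component {x : ℝ} (hx : Real.cos x ≤ 0) :
    ∃ k : ℤ, π/2 + 2*k*π ≤ x ∧ x ≤ 3*π/2 + 2*k*π := by
  set k : ℤ := ⌈(x - 3*π/2)/(2*π)⌉ with hk
  have hπ : (0:ℝ) < 2*π := by positivity
  have h1 : (x - 3*π/2)/(2*π) ≤ (k:ℝ) := Int.le_ceil _
  have h2 : (k:ℝ) < (x - 3*π/2)/(2*π) + 1 := Int.ceil_lt_add_one _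
  have h1' : x - 3*π/2 ≤ (k:ℝ)*(2*π) := (div_le_iff₀ hπ).mp h1
  have h2' : ((k:ℝ) - 1)*(2*π) < x - 3*π/2 := by
    rw [← lt_div_iff₀ hπ]
    linarith
  have hub : x - 2*k*π ≤ 3*π/2 := by nlinarith
  have hlb : -(π/2) < x - 2*k*π := by nlinarith
  have hcos : Real.cos (x - 2*k*π) ≤ 0 := by
    have : x - 2*(k:ℝ)*π = x - (k:ℝ)*(2*π) := by ring
    rw [this, Real.cos_sub_int_mul_two_pi]
    exact hx
  have hge : π/2 ≤ x - 2*k*π := by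
    by_contra hlt
    push_neg at hlt
    exact absurd hcos (not_le.mpr (Real.cos_pos_of_mem_Ioo ⟨hlb, hlt⟩))
  exact ⟨k, by linarith, by linarith⟩

/-- `cos` is nonpositive on each interval `[π/2 + 2kπ, 3π/2 + 2kπ]`. -/
lemma cos_nonpos_of_component {x : ℝ} {k : ℤ} (h1 : π/2 + 2*k*π ≤ x) (h2 : x ≤ 3*π/2 + 2*k*π) :
    Real.cos x ≤ 0 := by
  have : Real.cos x = Real.cos (x - k*(2*π)) := (Real.cos_sub_int_mul_two_pi x k).symm
  rw [this]
  apply Real.cos_nonpos_of_pi_div_two_le_of_le <;> [linarith; linarith]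

/-- No alternating sign pattern `≤0, >0, ≤0, >0` of `cos` on a monotone quadruple of
total width at most `2π`. -/
lemma no_alt_pattern_A {c1 c2 c3 c4 : ℝ} (h12 : c1 ≤ c2) (h23 : c2 ≤ c3) (h34 : c3 ≤ c4)
    (hw : c4 - c1 ≤ 2*π)
    (s1 : Real.cos c1 ≤ 0) (s2 : 0 < Real.cos c2) (s3 : Real.cos c3 ≤ 0)
    (s4 : 0 < Real.cos c4) : False := by
  have hπ : (0:ℝ) < π := Real.pi_pos
  obtain ⟨a, ha1, ha2⟩ := cos_nonpos_component s1
  obtain ⟨b, hb1, hb2⟩ := cos_nonpos_component s3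
  have hab : a + 1 ≤ b := by
    by_contra hle
    push_neg at hle
    have hba : b ≤ a := by omega
    have hba' : (b:ℝ) ≤ a := by exact_mod_cast hba
    have : Real.cos c2 ≤ 0 := cos_nonpos_of_component (k := a) (by linarith) (by nlinarith)
    linarith
  have hab' : (a:ℝ) + 1 ≤ b := by exact_mod_cast hab
  have hc4 : 3*π/2 + 2*b*π < c4 := by
    by_contra hle
    push_neg at hle
    have : Real.cos c4 ≤ 0 := cos_nonpos_of_component (k := b) (by linarith) hle
    linarith
  nlinarith

/-- No alternating sign pattern `>0, ≤0, >0, ≤0` of `cos` on a monotone quadruple of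
total width at most `2π`. -/
lemma no_alt_pattern_B {c1 c2 c3 c4 : ℝ} (h12 : c1 ≤ c2) (h23 : c2 ≤ c3) (h34 : c3 ≤ c4)
    (hw : c4 - c1 ≤ 2*π)
    (s1 : 0 < Real.cos c1) (s2 : Real.cos c2 ≤ 0) (s3 : 0 < Real.cos c3)
    (s4 : Real.cos c4 ≤ 0) : False := by
  have hπ : (0:ℝ) < π := Real.pi_pos
  obtain ⟨a, ha1, ha2⟩ := cos_nonpos_component s2
  obtain ⟨b, hb1, hb2⟩ := cos_nonpos_component s4
  have hab : a + 1 ≤ b := by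
    by_contra hle
    push_neg at hle
    have hba : b ≤ a := by omega
    have hba' : (b:ℝ) ≤ a := by exact_mod_cast hba
    have : Real.cos c3 ≤ 0 := cos_nonpos_of_component (k := a) (by linarith) (by nlinarith)
    linarith
  have hab' : (a:ℝ) + 1 ≤ b := by exact_mod_cast hab
  have hc1 : c1 < π/2 + 2*a*π := by
    by_contra hle
    push_neg at hle
    have : Real.cos c1 ≤ 0 := cos_nonpos_of_component (k := a) hle (by linarith)
    linarith
  nlinarith

/-- Core: a set cut out on `[0,1]` by the condition `cos (θ λ - φ₀) ≤ 0`, for a monotone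
angle `θ` of total variation at most `2π`, is order-connected or has order-connected
complement. -/
lemma core_oc (S : Set ℝ) (θ : ℝ → ℝ) (φ0 : ℝ)
    (hθ : MonotoneOn θ (Icc 0 1)) (hvar : θ 1 - θ 0 ≤ 2*π)
    (hSsub : S ⊆ Icc 0 1)
    (hiff : ∀ l ∈ Icc (0:ℝ) 1, (l ∈ S ↔ Real.cos (θ l - φ0) ≤ 0)) :
    S.OrdConnected ∨ (Icc 0 1 \ S).OrdConnected := by
  by_contra hcon
  push_neg at hcon
  obtain ⟨hS, hD⟩ := hcon
  rw [Set.ordConnected_iff] at hS hD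
  push_neg at hS hD
  obtain ⟨x1, hx1, z1, hz1, hxz1, hns1⟩ := hS
  obtain ⟨x2, hx2, z2, hz2, hxz2, hns2⟩ := hD
  obtain ⟨y1, hy1, hy1S⟩ := Set.not_subset.mp hns1
  obtain ⟨y2, hy2, hy2S⟩ := Set.not_subset.mp hns2
  -- memberships in Icc 0 1
  have hx1I : x1 ∈ Icc (0:ℝ) 1 := hSsub hx1
  have hz1I : z1 ∈ Icc (0:ℝ) 1 := hSsub hz1
  have hy1I : y1 ∈ Icc (0:ℝ) 1 := ⟨hx1I.1.trans hy1.1, hy1.2.trans hz1I.2⟩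
  have hx2I : x2 ∈ Icc (0:ℝ) 1 := hx2.1
  have hz2I : z2 ∈ Icc (0:ℝ) 1 := hz2.1
  have hy2I : y2 ∈ Icc (0:ℝ) 1 := ⟨hx2I.1.trans hy2.1, hy2.2.trans hz2I.2⟩
  have hy2S' : y2 ∈ S := by
    by_contra hc
    exact hy2S ⟨hy2I, hc⟩
  -- signs
  have sgn : ∀ l ∈ Icc (0:ℝ) 1, l ∉ S → 0 < Real.cos (θ l - φ0) := by
    intro l hl hls
    by_contra hc
    push_neg at hc
    exact hls ((hiff l hl).mpr hc)
  -- width bound for any p q in Icc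
  have wid : ∀ p ∈ Icc (0:ℝ) 1, ∀ q ∈ Icc (0:ℝ) 1,
      (θ q - φ0) - (θ p - φ0) ≤ 2*π := by
    intro p hp q hq
    have h1 : θ 0 ≤ θ p := hθ (left_mem_Icc.mpr zero_le_one) hp hp.1
    have h2 : θ q ≤ θ 1 := hθ hq (right_mem_Icc.mpr zero_le_one) hq.2
    linarith
  have mono : ∀ p ∈ Icc (0:ℝ) 1, ∀ q ∈ Icc (0:ℝ) 1, p ≤ q →
      θ p - φ0 ≤ θ q - φ0 := by
    intro p hp q hq hpq
    have := hθ hp hq hpq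
    linarith
  rcases le_total y1 y2 with hy | hy
  · -- quadruple x1 ≤ y1 ≤ y2 ≤ z2, pattern (∈S, ∉S, ∈S, ∉S) : cos ≤0, >0, ≤0, >0
    exact no_alt_pattern_A
      (mono x1 hx1I y1 hy1I hy1.1) (mono y1 hy1I y2 hy2I hy) (mono y2 hy2I z2 hz2I hy2.2)
      (wid x1 hx1I z2 hz2I)
      ((hiff x1 hx1I).mp hx1) (sgn y1 hy1I hy1S) ((hiff y2 hy2I).mp hy2S')
      (sgn z2 hz2I (fun hc => hz2.2 hc))
  · -- quadruple x2 ≤ y2 ≤ y1 ≤ z1, pattern (∉S, ∈S, ∉S, ∈S)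
    exact no_alt_pattern_B
      (mono x2 hx2I y2 hy2I hy2.1) (mono y2 hy2I y1 hy1I hy) (mono y1 hy1I z1 hz1I hy1.2)
      (wid x2 hx2I z1 hz1I)
      (sgn x2 hx2I (fun hc => hx2.2 hc)) ((hiff y2 hy2I).mp hy2S') (sgn y1 hy1I hy1S)
      ((hiff z1 hz1I).mp hz1)

lemma planeA_convex : Convex ℝ planeA := by
  intro x hx y hy a b ha hb hab
  simp only [planeA, mem_setOf_eq] at *
  have : (a • x + b • y) 0 + (a • x + b • y) 1 + (a • x + b • y) 2
      = a * (x 0 + x 1 + x 2) + b * (y 0 + y 1 + y 2) := by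
    simp [PiLp.add_apply, PiLp.smul_apply, smul_eq_mul]
    ring
  rw [this, hx, hy]
  linarith

lemma intA_subset {s : Set E3} : intA s ⊆ s := by
  rintro x ⟨hxA, U, hU, hxU, hUs⟩
  exact hUs ⟨hxU, hxA⟩

/-- Lemma A: the open segment from a relative interior point to a point of a convex
subset of `planeA` stays in the relative interior. -/
lemma segment_mem_intA {s : Set E3} (hconv : Convex ℝ s) (hsA : s ⊆ planeA)
    {c x : E3} (hc : c ∈ intA s) (hx : x ∈ s) {ρ : ℝ} (h0 : 0 < ρ) (h1 : ρ < 1) :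
    c + ρ • (x - c) ∈ intA s := by
  obtain ⟨hcA, U, hU, hcU, hUs⟩ := hc
  obtain ⟨ε, hε, hball⟩ := Metric.isOpen_iff.mp hU c hcU
  have hxA : x ∈ planeA := hsA hx
  have hρ1 : (0:ℝ) < 1 - ρ := by linarith
  set z := c + ρ • (x - c) with hz
  have hzA : z ∈ planeA := by
    simp only [planeA, mem_setOf_eq, hz, PiLp.add_apply, PiLp.smul_apply, PiLp.sub_apply,
      smul_eq_mul]
    have hc' : c 0 + c 1 + c 2 = 1 := hcA
    have hx' : x 0 + x 1 + x 2 = 1 := hxA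
    nlinarith
  refine ⟨hzA, Metric.ball z ((1 - ρ) * ε), Metric.isOpen_ball,
    Metric.mem_ball_self (mul_pos hρ1 hε), ?_⟩
  rintro p ⟨hpb, hpA⟩
  set q := c + (1 - ρ)⁻¹ • (p - z) with hq
  have hqA : q ∈ planeA := by
    simp only [planeA, mem_setOf_eq, hq, PiLp.add_apply, PiLp.smul_apply, PiLp.sub_apply,
      smul_eq_mul]
    have hc' : c 0 + c 1 + c 2 = 1 := hcA
    have hp' : p 0 + p 1 + p 2 = 1 := hpA
    have hz' : z 0 + z 1 + z 2 = 1 := hzA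
    field_simp
    nlinarith
  have hqb : q ∈ Metric.ball c ε := by
    rw [Metric.mem_ball, hq]
    have : dist (c + (1-ρ)⁻¹ • (p - z)) c = ‖(1-ρ)⁻¹ • (p - z)‖ := by
      rw [dist_eq_norm]; congr 1; abel
    rw [this, norm_smul, Real.norm_eq_abs, abs_of_pos (inv_pos.mpr hρ1)]
    have hd : ‖p - z‖ < (1 - ρ) * ε := by
      rw [← dist_eq_norm]; exact hpb
    calc (1-ρ)⁻¹ * ‖p - z‖ < (1-ρ)⁻¹ * ((1-ρ)*ε) := by
          exact mul_lt_mul_of_pos_left hd (inv_pos.mpr hρ1)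
      _ = ε := by field_simp
  have hqs : q ∈ s := hUs ⟨hball hqb, hqA⟩
  have hcomb : p = (1 - ρ) • q + ρ • x := by
    rw [hq, hz]
    rw [smul_add, smul_smul]
    rw [mul_inv_cancel₀ (ne_of_gt hρ1)]
    module
  rw [hcomb]
  exact hconv hqs hx (le_of_lt hρ1) (le_of_lt h0) (by ring)

/-- Completeness of the frame `(u,v)` on the direction plane: a sum-zero vector orthogonal
to `u` and `v` vanishes; consequence: `ℓ` determined, so `(ℓ u, ℓ v) ≠ 0` for `ℓ`
nonconstant on `planeA`. -/
lemma ell_uv_ne_zero (u v : E3) (hu : ‖u‖ = 1) (hv : ‖v‖ = 1) (huv : (inner ℝ u v : ℝ) = 0)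
    (hu0 : u 0 + u 1 + u 2 = 0) (hv0 : v 0 + v 1 + v 2 = 0)
    (ℓ : E3 →ₗ[ℝ] ℝ) (hℓ : ∃ x ∈ planeA, ∃ y ∈ planeA, ℓ x ≠ ℓ y) :
    ¬ (ℓ u = 0 ∧ ℓ v = 0) := by
  rintro ⟨hℓu, hℓv⟩
  obtain ⟨x, hx, y, hy, hxy⟩ := hℓ
  set d := x - y with hd
  have hd0 : d 0 + d 1 + d 2 = 0 := by
    have hx' : x 0 + x 1 + x 2 = 1 := hx
    have hy' : y 0 + y 1 + y 2 = 1 := hy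
    simp only [hd, PiLp.sub_apply]
    linarith
  -- n = (1,1,1)/√3
  set n : E3 := (Real.sqrt 3)⁻¹ • (WithLp.toLp 2 (fun _ => 1) : EuclideanSpace ℝ (Fin 3)) with hn
  have h3 : (0:ℝ) < Real.sqrt 3 := Real.sqrt_pos.mpr (by norm_num)
  have hinner_one : ∀ w : E3, (inner ℝ w (WithLp.toLp 2 (fun _ => 1) : EuclideanSpace ℝ (Fin 3)) : ℝ)
      = w 0 + w 1 + w 2 := by
    intro w
    rw [PiLp.inner_apply]
    simp [Fin.sum_univ_three, RCLike.inner_apply]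
  have hsq3 : Real.sqrt 3 * Real.sqrt 3 = 3 := Real.mul_self_sqrt (by norm_num)
  -- orthonormal family
  set W : Fin 3 → E3 := ![u, v, n] with hW
  have hortho : Orthonormal ℝ W := by
    rw [orthonormal_iff_ite]
    have huu : (inner ℝ u u : ℝ) = 1 := by
      rw [real_inner_self_eq_norm_sq, hu]; norm_num
    have hvv : (inner ℝ v v : ℝ) = 1 := by
      rw [real_inner_self_eq_norm_sq, hv]; norm_num
    have hnn : (inner ℝ n n : ℝ) = 1 := by
      rw [hn, real_inner_smul_left, real_inner_smul_right, hinner_one]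
      simp only
      field_simp
      nlinarith
    have hun : (inner ℝ u n : ℝ) = 0 := by
      rw [hn, real_inner_smul_right, hinner_one, hu0, mul_zero]
    have hvn : (inner ℝ v n : ℝ) = 0 := by
      rw [hn, real_inner_smul_right, hinner_one, hv0, mul_zero]
    intro i j
    fin_cases i <;> fin_cases j <;>
      simp [hW, huu, hvv, hnn, hun, hvn, huv, real_inner_comm u v, real_inner_comm u n, hu, hv,
          (by rw [norm_eq_sqrt_real_inner, hnn, Real.sqrt_one] : ‖n‖ = 1),
        real_inner_comm v n]
  have hspan : Submodule.span ℝ (range W) = ⊤ := by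
    apply LinearIndependent.span_eq_top_of_card_eq_finrank hortho.linearIndependent
    simp [finrank_euclideanSpace_fin]
  -- d is orthogonal to u, v? no; rather: w := d - ⟨d,u⟩u - ⟨d,v⟩v is orthogonal to all of W
  set w : E3 := d - (inner ℝ d u : ℝ) • u - (inner ℝ d v : ℝ) • v with hw
  have huu : (inner ℝ u u : ℝ) = 1 := by
    rw [real_inner_self_eq_norm_sq, hu]; norm_num
  have hvv : (inner ℝ v v : ℝ) = 1 := by
    rw [real_inner_self_eq_norm_sq, hv]; norm_num
  have hvu : (inner ℝ v u : ℝ) = 0 := by rw [real_inner_comm]; exact huv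
  have hwu : (inner ℝ w u : ℝ) = 0 := by
    simp only [hw, inner_sub_left, real_inner_smul_left, huu, hvu]
    ring
  have hwv : (inner ℝ w v : ℝ) = 0 := by
    simp only [hw, inner_sub_left, real_inner_smul_left, hvv, huv]
    ring
  have hwn : (inner ℝ w n : ℝ) = 0 := by
    have hw0 : w 0 + w 1 + w 2 = 0 := by
      simp only [hw, PiLp.sub_apply, PiLp.smul_apply, smul_eq_mul]
      linear_combination hd0 - (inner ℝ d u : ℝ) * hu0 - (inner ℝ d v : ℝ) * hv0
    rw [hn, real_inner_smul_right, hinner_one, hw0, mul_zero]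
  have hwW : ∀ i, (inner ℝ w (W i) : ℝ) = 0 := by
    intro i
    fin_cases i <;> simpa [hW] using (by assumption : _)
  have key : ∀ z, z ∈ Submodule.span ℝ (range W) → (inner ℝ w z : ℝ) = 0 := by
    intro z hz
    induction hz using Submodule.span_induction with
    | mem x hx =>
        obtain ⟨i, rfl⟩ := hx
        exact hwW i
    | zero => simp
    | add x y _ _ hx hy => rw [inner_add_right, hx, hy]; ring
    | smul a x _ hx => rw [real_inner_smul_right, hx]; ring
  have hwzero : w = 0 := by
    have hmem : w ∈ Submodule.span ℝ (range W) := by rw [hspan]; trivial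
    exact inner_self_eq_zero.mp (key w hmem)
  have hdspan : d = (inner ℝ d u : ℝ) • u + (inner ℝ d v : ℝ) • v := by
    have h0 := hwzero
    rw [hw] at h0
    have h1 : d - ((inner ℝ d u : ℝ) • u + (inner ℝ d v : ℝ) • v) = 0 := by
      rw [← h0]; abel
    exact sub_eq_zero.mp h1
  have hld : ℓ d = 0 := by
    rw [hdspan, map_add, _root_.map_smul, _root_.map_smul, hℓu, hℓv]
    simp
  apply hxy
  have : ℓ d = ℓ x - ℓ y := by rw [hd, map_sub]
  linarith [this ▸ hld]


lemma colorTri_subset_planeA (η : ℝ → E3) (hηΔ : ∀ lam ∈ Icc (0:ℝ) 1, η lam ∈ simplex2) :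
    colorTri η ⊆ planeA := by
  apply convexHull_min _ planeA_convex
  rintro z ⟨lam, hlam, rfl⟩
  exact (hηΔ lam hlam).2

lemma eta_mem_colorTri (η : ℝ → E3) {lam : ℝ} (hlam : lam ∈ Icc (0:ℝ) 1) :
    η lam ∈ colorTri η :=
  subset_convexHull ℝ _ ⟨lam, hlam, rfl⟩

lemma eta_not_intA (η : ℝ → E3) (u v : E3) (hconv : IsConvexLocus η u v)
    {lam : ℝ} (hlam : lam ∈ Icc (0:ℝ) 1) : η lam ∉ intA (colorTri η) := by
  have := hconv.1 ⟨lam, hlam, rfl⟩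
  exact this.2

/-- Case 1 core: if the cut line passes through a relative interior point of the
color triangle, the sublevel set is order-connected or has order-connected complement. -/
lemma case1core (η : ℝ → E3) (u v : E3) (hconv : IsConvexLocus η u v)
    (ℓ : E3 →ₗ[ℝ] ℝ) (hαβ : ¬ (ℓ u = 0 ∧ ℓ v = 0)) (t' : ℝ) (c : E3)
    (hc : c ∈ intA (colorTri η)) (hct : ℓ c = t') :
    {lam ∈ Icc (0:ℝ) 1 | ℓ (η lam) ≤ t'}.OrdConnected ∨
    (Icc (0:ℝ) 1 \ {lam ∈ Icc (0:ℝ) 1 | ℓ (η lam) ≤ t'}).OrdConnected := by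
  obtain ⟨θ, hθcont, hθmono, hθvar, hθeq⟩ := hconv.2 c hc
  -- polar data for (ℓ u, ℓ v)
  set z : ℂ := (ℓ u : ℂ) + (ℓ v : ℂ) * Complex.I with hz
  have hzre : z.re = ℓ u := by simp [hz]
  have hzim : z.im = ℓ v := by simp [hz]
  have hzne : z ≠ 0 := by
    intro h
    apply hαβ
    constructor
    · rw [← hzre, h]; simp
    · rw [← hzim, h]; simp
  set γ : ℝ := ‖z‖ with hγdef
  have hγ : 0 < γ := by
    rw [hγdef]
    exact norm_pos_iff.mpr hzne
  set φ0 : ℝ := z.arg with hφ0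
  have hpolar : ∀ φ : ℝ, ℓ u * Real.cos φ + ℓ v * Real.sin φ = γ * Real.cos (φ - φ0) := by
    intro φ
    rw [Real.cos_sub]
    have h1 : γ * Real.cos φ0 = ℓ u := by rw [hγdef, hφ0, Complex.norm_mul_cos_arg, hzre]
    have h2 : γ * Real.sin φ0 = ℓ v := by rw [hγdef, hφ0, Complex.norm_mul_sin_arg, hzim]
    linear_combination (- Real.cos φ) * h1 - Real.sin φ * h2
  -- the sign identity
  have hsign : ∀ lam ∈ Icc (0:ℝ) 1,
      (ℓ (η lam) ≤ t' ↔ Real.cos (θ lam - φ0) ≤ 0) := by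
    intro lam hlam
    have hr : 0 < ‖η lam - c‖ := by
      rw [norm_pos_iff, sub_ne_zero]
      intro h
      exact eta_not_intA η u v hconv hlam (h ▸ hc)
    set R := ‖η lam - c‖ with hR
    have heq := hθeq lam hlam
    rw [← hR] at heq
    have hval : ℓ (η lam) - t' = R * (γ * Real.cos (θ lam - φ0)) := by
      have h1 : ℓ (η lam - c) = ℓ (η lam) - t' := by rw [map_sub, hct]
      rw [← h1, heq]
      rw [_root_.map_smul, map_add, _root_.map_smul, _root_.map_smul]
      simp only [smul_eq_mul]
      rw [← hpolar (θ lam)]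
      ring
    constructor
    · intro h
      by_contra hcp
      push_neg at hcp
      nlinarith [mul_pos (mul_pos hr hγ) hcp]
    · intro h
      have h2 : (R * γ) * Real.cos (θ lam - φ0) ≤ 0 :=
        mul_nonpos_of_nonneg_of_nonpos (le_of_lt (mul_pos hr hγ)) h
      nlinarith [h2]
  have hSsub : {lam ∈ Icc (0:ℝ) 1 | ℓ (η lam) ≤ t'} ⊆ Icc (0:ℝ) 1 := fun lam h => h.1
  have hiff : ∀ lam ∈ Icc (0:ℝ) 1,
      (lam ∈ {lam ∈ Icc (0:ℝ) 1 | ℓ (η lam) ≤ t'} ↔ Real.cos (θ lam - φ0) ≤ 0) := by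
    intro lam hlam
    constructor
    · intro h; exact (hsign lam hlam).mp h.2
    · intro h; exact ⟨hlam, (hsign lam hlam).mpr h⟩
  rcases hθmono with hm | hm
  · apply core_oc _ θ φ0 hm _ hSsub hiff
    have h01 : θ 0 ≤ θ 1 := hm (left_mem_Icc.mpr zero_le_one) (right_mem_Icc.mpr zero_le_one)
      zero_le_one
    calc θ 1 - θ 0 = |θ 1 - θ 0| := by rw [abs_of_nonneg (by linarith)]
      _ ≤ 2*π := hθvar
  · apply core_oc _ (fun lam => - θ lam) (- φ0) _ _ hSsub _
    · intro a ha b hb hab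
      simp only [neg_le_neg_iff]
      exact hm ha hb hab
    · have h01 : θ 1 ≤ θ 0 := hm (left_mem_Icc.mpr zero_le_one) (right_mem_Icc.mpr zero_le_one)
        zero_le_one
      have habs : |θ 1 - θ 0| = θ 0 - θ 1 := by rw [abs_of_nonpos (by linarith)]; ring
      have h2 : θ 0 - θ 1 ≤ 2*π := by rw [← habs]; exact hθvar
      show (fun lam => -θ lam) 1 - (fun lam => -θ lam) 0 ≤ 2*π
      simp only
      linarith
    · intro lam hlam
      rw [hiff lam hlam]
      constructor <;> intro h
      · have : (-θ lam - -φ0) = -(θ lam - φ0) := by ring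
        rw [this, Real.cos_neg]
        exact h
      · have heq2 : (-θ lam - -φ0) = -(θ lam - φ0) := by ring
        rw [heq2, Real.cos_neg] at h
        exact h

theorem halfplane_preimage_is_cyclic_interval
    (η : ℝ → E3) (hηcont : ContinuousOn η (Icc 0 1))
    (hηΔ : ∀ lam ∈ Icc (0:ℝ) 1, η lam ∈ simplex2)
    (u v : E3) (hu : ‖u‖ = 1) (hv : ‖v‖ = 1) (huv : (inner ℝ u v : ℝ) = 0)
    (hu0 : u 0 + u 1 + u 2 = 0) (hv0 : v 0 + v 1 + v 2 = 0)
    (hTint : (intA (colorTri η)).Nonempty)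
    (hconv : IsConvexLocus η u v)
    (ℓ : E3 →ₗ[ℝ] ℝ) (hℓ : ∃ x ∈ planeA, ∃ y ∈ planeA, ℓ x ≠ ℓ y) (t : ℝ) :
    {lam ∈ Icc (0:ℝ) 1 | η lam ∈ planeA ∧ ℓ (η lam) ≤ t} = ∅ ∨
    {lam ∈ Icc (0:ℝ) 1 | η lam ∈ planeA ∧ ℓ (η lam) ≤ t} = Icc (0:ℝ) 1 ∨
    ∃ a ∈ Icc (0:ℝ) 1, ∃ b ∈ Icc (0:ℝ) 1,
      {lam ∈ Icc (0:ℝ) 1 | η lam ∈ planeA ∧ ℓ (η lam) ≤ t} = cycIcc a b := by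
  have hplane : ∀ lam ∈ Icc (0:ℝ) 1, η lam ∈ planeA := fun lam h => (hηΔ lam h).2
  have hset : {lam ∈ Icc (0:ℝ) 1 | η lam ∈ planeA ∧ ℓ (η lam) ≤ t}
      = {lam ∈ Icc (0:ℝ) 1 | ℓ (η lam) ≤ t} := by
    ext lam
    constructor
    · rintro ⟨h1, _, h3⟩; exact ⟨h1, h3⟩
    · rintro ⟨h1, h2⟩; exact ⟨h1, hplane lam h1, h2⟩
  rw [hset]
  -- general facts
  have hαβ := ell_uv_ne_zero u v hu hv huv hu0 hv0 ℓ hℓ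
  have hTplane : colorTri η ⊆ planeA := colorTri_subset_planeA η hηΔ
  have hTconv : Convex ℝ (colorTri η) := convex_convexHull ℝ _
  have hℓcont : Continuous ℓ := ℓ.continuous_of_finiteDimensional
  have hclosed : ∀ s : ℝ, IsClosed {lam ∈ Icc (0:ℝ) 1 | ℓ (η lam) ≤ s} := by
    intro s
    have h1 : ContinuousOn (fun lam => ℓ (η lam)) (Icc (0:ℝ) 1) :=
      hℓcont.comp_continuousOn hηcont
    have h2 : {lam ∈ Icc (0:ℝ) 1 | ℓ (η lam) ≤ s}
        = Icc (0:ℝ) 1 ∩ (fun lam => ℓ (η lam)) ⁻¹' Iic s := rfl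
    rw [h2]
    exact h1.preimage_isClosed_of_isClosed isClosed_Icc isClosed_Iic
  have hssub : ∀ s : ℝ, {lam ∈ Icc (0:ℝ) 1 | ℓ (η lam) ≤ s} ⊆ Icc (0:ℝ) 1 :=
    fun s lam h => h.1
  by_cases hline : ∃ c ∈ intA (colorTri η), ℓ c = t
  · obtain ⟨c, hc, hct⟩ := hline
    exact cyc_of_closed_oc _ (hssub t) (hclosed t) (case1core η u v hconv ℓ hαβ t c hc hct)
  · push_neg at hline
    obtain ⟨c0, hc0⟩ := hTint
    rcases lt_trichotomy (ℓ c0) t with hlt | heq | hgt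
    · -- line strictly above the triangle interior values: everything is in the half-plane
      right; left
      apply le_antisymm (hssub t)
      intro lam hlam
      refine ⟨hlam, ?_⟩
      by_contra hgt'
      push_neg at hgt'
      set ρ := (t - ℓ c0)/(ℓ (η lam) - ℓ c0) with hρ
      have hd : (0:ℝ) < ℓ (η lam) - ℓ c0 := by linarith
      have hρ0 : 0 < ρ := div_pos (by linarith) hd
      have hρ1 : ρ < 1 := (div_lt_one hd).mpr (by linarith)
      have hmem := segment_mem_intA hTconv hTplane hc0 (eta_mem_colorTri η hlam) hρ0 hρ1
      apply hline _ hmem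
      rw [map_add, _root_.map_smul, map_sub]
      simp only [smul_eq_mul, hρ]
      field_simp
      ring
    · exact absurd heq (hline c0 hc0)
    · -- the half-plane misses the triangle interior from below
      have hge : ∀ lam ∈ Icc (0:ℝ) 1, t ≤ ℓ (η lam) := by
        intro lam hlam
        by_contra hlt'
        push_neg at hlt'
        set ρ := (ℓ c0 - t)/(ℓ c0 - ℓ (η lam)) with hρ
        have hd : (0:ℝ) < ℓ c0 - ℓ (η lam) := by linarith
        have hρ0 : 0 < ρ := div_pos (by linarith) hd
        have hρ1 : ρ < 1 := (div_lt_one hd).mpr (by linarith)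
        have hmem := segment_mem_intA hTconv hTplane hc0 (eta_mem_colorTri η hlam) hρ0 hρ1
        apply hline _ hmem
        rw [map_add, _root_.map_smul, map_sub]
        simp only [smul_eq_mul, hρ]
        field_simp
        ring
      by_cases hSne : {lam ∈ Icc (0:ℝ) 1 | ℓ (η lam) ≤ t}.Nonempty
      · obtain ⟨lam0, hlam0I, hlam0⟩ := hSne
        have hteq : ℓ (η lam0) = t := le_antisymm hlam0 (hge lam0 hlam0I)
        set e := ℓ c0 - t with he'
        have he : 0 < e := by rw [he']; linarith
        -- approximating thresholds and interior points
        set tn : ℕ → ℝ := fun n => t + e/((n:ℝ)+2) with htn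
        have htn_gt : ∀ n, t < tn n := by
          intro n
          have : (0:ℝ) < ((n:ℝ)+2) := by positivity
          have := div_pos he this
          simp only [htn]
          linarith
        have htn_mono : ∀ m n : ℕ, m ≤ n → tn n ≤ tn m := by
          intro m n hmn
          have h2 : (0:ℝ) < (m:ℝ)+2 := by positivity
          have h3 : ((m:ℝ)+2) ≤ ((n:ℝ)+2) := by
            have : (m:ℝ) ≤ (n:ℝ) := by exact_mod_cast hmn
            linarith
          have := div_le_div_of_nonneg_left he.le h2 h3
          simp only [htn]
          linarith
        have hcn : ∀ n : ℕ, ∃ c' ∈ intA (colorTri η), ℓ c' = tn n := by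
          intro n
          have hn2 : (0:ℝ) < (n:ℝ)+2 := by positivity
          set ρ : ℝ := 1 - 1/((n:ℝ)+2) with hρ
          have hρ0 : 0 < ρ := by
            rw [hρ]
            have h1 : 1/((n:ℝ)+2) ≤ 1/(2:ℝ) := by
              apply div_le_div_of_nonneg_left one_pos.le two_pos
              have : (0:ℝ) ≤ (n:ℝ) := Nat.cast_nonneg n
              linarith
            linarith
          have hρ1 : ρ < 1 := by
            rw [hρ]
            have : 0 < 1/((n:ℝ)+2) := by positivity
            linarith
          refine ⟨c0 + ρ • (η lam0 - c0),
            segment_mem_intA hTconv hTplane hc0 (eta_mem_colorTri η hlam0I) hρ0 hρ1, ?_⟩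
          rw [map_add, _root_.map_smul, map_sub]
          simp only [smul_eq_mul, hρ, hteq, htn, he']
          field_simp
          ring
        have hQn : ∀ n : ℕ, {lam ∈ Icc (0:ℝ) 1 | ℓ (η lam) ≤ tn n}.OrdConnected ∨
            (Icc (0:ℝ) 1 \ {lam ∈ Icc (0:ℝ) 1 | ℓ (η lam) ≤ tn n}).OrdConnected := by
          intro n
          obtain ⟨c', hc', hct'⟩ := hcn n
          exact case1core η u v hconv ℓ hαβ (tn n) c' hc' hct'
        have hchain : ∀ m n : ℕ, m ≤ n →
            {lam ∈ Icc (0:ℝ) 1 | ℓ (η lam) ≤ tn n} ⊆ {lam ∈ Icc (0:ℝ) 1 | ℓ (η lam) ≤ tn m} := by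
          intro m n hmn lam hlam
          exact ⟨hlam.1, hlam.2.trans (htn_mono m n hmn)⟩
        have hsubn : ∀ n : ℕ,
            {lam ∈ Icc (0:ℝ) 1 | ℓ (η lam) ≤ t} ⊆ {lam ∈ Icc (0:ℝ) 1 | ℓ (η lam) ≤ tn n} :=
          fun n lam hlam => ⟨hlam.1, hlam.2.trans (htn_gt n).le⟩
        have hinter : {lam ∈ Icc (0:ℝ) 1 | ℓ (η lam) ≤ t}
            = ⋂ n : ℕ, {lam ∈ Icc (0:ℝ) 1 | ℓ (η lam) ≤ tn n} := by
          apply le_antisymm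
          · exact fun lam hlam => mem_iInter.mpr (fun n => hsubn n hlam)
          · intro lam hlam
            rw [mem_iInter] at hlam
            refine ⟨(hlam 0).1, ?_⟩
            by_contra hgt'
            push_neg at hgt'
            obtain ⟨n, hn⟩ := exists_nat_gt (e/(ℓ (η lam) - t))
            have hδ : 0 < ℓ (η lam) - t := by linarith
            have hkey : e/((n:ℝ)+2) < ℓ (η lam) - t := by
              rw [div_lt_iff₀ (by positivity)]
              have h1 : e < (n:ℝ) * (ℓ (η lam) - t) := by
                rw [div_lt_iff₀ hδ] at hn
                linarith
              nlinarith [hδ]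
            have := (hlam n).2
            simp only [htn] at this
            linarith
        -- the intersection inherits the order-connectedness dichotomy
        have hQ : {lam ∈ Icc (0:ℝ) 1 | ℓ (η lam) ≤ t}.OrdConnected ∨
            (Icc (0:ℝ) 1 \ {lam ∈ Icc (0:ℝ) 1 | ℓ (η lam) ≤ t}).OrdConnected := by
          by_cases hD : (Icc (0:ℝ) 1 \ {lam ∈ Icc (0:ℝ) 1 | ℓ (η lam) ≤ t}).OrdConnected
          · exact Or.inr hD
          · left
            rw [Set.ordConnected_iff] at hD ⊢
            push_neg at hD
            obtain ⟨x2, hx2, z2, hz2, hxz2, hns2⟩ := hD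
            obtain ⟨y2, hy2, hy2D⟩ := Set.not_subset.mp hns2
            have hy2I : y2 ∈ Icc (0:ℝ) 1 := ⟨hx2.1.1.trans hy2.1, hy2.2.trans hz2.1.2⟩
            have hy2S : y2 ∈ {lam ∈ Icc (0:ℝ) 1 | ℓ (η lam) ≤ t} := by
              by_contra hcp
              exact hy2D ⟨hy2I, hcp⟩
            obtain ⟨n1, hn1⟩ : ∃ n1, x2 ∉ {lam ∈ Icc (0:ℝ) 1 | ℓ (η lam) ≤ tn n1} := by
              by_contra hcp
              push_neg at hcp
              exact hx2.2 (hinter ▸ mem_iInter.mpr hcp)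
            obtain ⟨n2, hn2⟩ : ∃ n2, z2 ∉ {lam ∈ Icc (0:ℝ) 1 | ℓ (η lam) ≤ tn n2} := by
              by_contra hcp
              push_neg at hcp
              exact hz2.2 (hinter ▸ mem_iInter.mpr hcp)
            intro p hp q hq hpq x hx
            rw [hinter, mem_iInter]
            intro n
            set m := max n (max n1 n2) with hm
            have hCm : {lam ∈ Icc (0:ℝ) 1 | ℓ (η lam) ≤ tn m}.OrdConnected := by
              rcases hQn m with h | h
              · exact h
              · exfalso
                have hx2m : x2 ∈ Icc (0:ℝ) 1 \ {lam ∈ Icc (0:ℝ) 1 | ℓ (η lam) ≤ tn m} := by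
                  refine ⟨hx2.1, fun hc => hn1 ?_⟩
                  exact hchain n1 m (le_trans (le_max_left n1 n2) (le_max_right n _)) hc
                have hz2m : z2 ∈ Icc (0:ℝ) 1 \ {lam ∈ Icc (0:ℝ) 1 | ℓ (η lam) ≤ tn m} := by
                  refine ⟨hz2.1, fun hc => hn2 ?_⟩
                  exact hchain n2 m (le_trans (le_max_right n1 n2) (le_max_right n _)) hc
                have := h.out hx2m hz2m hy2
                exact this.2 (hsubn m hy2S)
            have hxm : x ∈ {lam ∈ Icc (0:ℝ) 1 | ℓ (η lam) ≤ tn m} :=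
              hCm.out (hsubn m hp) (hsubn m hq) hx
            exact hchain n m (le_max_left n _) hxm
        exact cyc_of_closed_oc _ (hssub t) (hclosed t) hQ
      · left
        rw [not_nonempty_iff_eq_empty] at hSne
        exact hSne
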